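/- arXiv:2410.24088 — 3 statements merged into one kernel-verified Lean document; each statement's English description precedes it below -/
import Mathlib

section
/- Let F ∈ ℂ_p[X] be a nonzero polynomial, α a root of F with |α|_p = 1, and ζ ∈ ℂ_p a root of unity with F(ζ) ≠ 0. Then |ζ - α|_p ≥ |F(ζ)|_p / |F|_p. -/
/-- The `p`-adic Gauss norm of a polynomial: the maximum of the norms of its
coefficients. -/
noncomputable def gaussNorm {K : Type*} [NontriviallyNormedField K] (F : Polynomial K) : ℝ :=
  ((F.support.sup fun i => ‖F.coeff i‖₊ : NNReal) : ℝ)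

/-- Let `F ∈ ℂ_p[X]` be nonzero, `α` a root of `F` with `|α|_p = 1`, and `ζ` a root of
unity with `F(ζ) ≠ 0`. Then `|ζ - α|_p ≥ |F(ζ)|_p / |F|_p`. -/
theorem stmt3 {p : ℕ} (hp : p.Prime)
    {K : Type*} [NontriviallyNormedField K] [IsUltrametricDist K] [IsAlgClosed K]
    [CompleteSpace K] (hpnorm : ‖(p : K)‖ = (p : ℝ)⁻¹)
    (F : Polynomial K) (hF : F ≠ 0) (α : K) (hroot : F.eval α = 0) (hα : ‖α‖ = 1)
    (ζ : K) (hζ : IsOfFinOrder ζ) (hFζ : F.eval ζ ≠ 0) :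
    ‖F.eval ζ‖ / gaussNorm F ≤ ‖ζ - α‖ := by
  have hζ1 : ‖ζ‖ = 1 := hζ.norm_eq_one
  set n := F.natDegree + 1 with hn
  set g : K := ∑ i ∈ Finset.range n,
      F.coeff i * ∑ j ∈ Finset.range i, ζ ^ j * α ^ (i - 1 - j) with hg
  -- key factorization
  have key : F.eval ζ = g * (ζ - α) := by
    have h1 : F.eval ζ = F.eval ζ - F.eval α := by rw [hroot, sub_zero]
    rw [h1, Polynomial.eval_eq_sum_range, Polynomial.eval_eq_sum_range,
      ← Finset.sum_sub_distrib, hg, Finset.sum_mul]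
    refine Finset.sum_congr rfl fun i _ => ?_
    rw [mul_assoc, geom_sum₂_mul, mul_sub]
  -- gaussNorm positivity
  have hG0 : 0 < gaussNorm F := by
    obtain ⟨i, hi⟩ := Polynomial.support_nonempty.mpr hF
    have : ‖F.coeff i‖₊ ≤ F.support.sup fun i => ‖F.coeff i‖₊ := Finset.le_sup (f := fun i => ‖F.coeff i‖₊) hi
    have hne : F.coeff i ≠ 0 := Polynomial.mem_support_iff.mp hi
    have h0 : (0 : NNReal) < ‖F.coeff i‖₊ := by simpa using hne
    exact_mod_cast lt_of_lt_of_le h0 this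
  -- norm bound on g
  have hgle : ‖g‖ ≤ gaussNorm F := by
    refine IsUltrametricDist.norm_sum_le_of_forall_le_of_nonneg hG0.le fun i _ => ?_
    have hinner : ‖∑ j ∈ Finset.range i, ζ ^ j * α ^ (i - 1 - j)‖ ≤ 1 := by
      refine IsUltrametricDist.norm_sum_le_of_forall_le_of_nonneg zero_le_one fun j _ => ?_
      rw [norm_mul, norm_pow, norm_pow, hζ1, hα, one_pow, one_pow, one_mul]
    have hcoeff : ‖F.coeff i‖ ≤ gaussNorm F := by
      by_cases hci : F.coeff i = 0
      · simp [hci, hG0.le]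
      · have : ‖F.coeff i‖₊ ≤ F.support.sup fun i => ‖F.coeff i‖₊ :=
          Finset.le_sup (f := fun i => ‖F.coeff i‖₊) (Polynomial.mem_support_iff.mpr hci)
        exact_mod_cast this
    calc ‖F.coeff i * ∑ j ∈ Finset.range i, ζ ^ j * α ^ (i - 1 - j)‖
        = ‖F.coeff i‖ * ‖∑ j ∈ Finset.range i, ζ ^ j * α ^ (i - 1 - j)‖ := norm_mul _ _
      _ ≤ ‖F.coeff i‖ * 1 := by
          exact mul_le_mul_of_nonneg_left hinner (norm_nonneg _)
      _ = ‖F.coeff i‖ := mul_one _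
      _ ≤ gaussNorm F := hcoeff
  rw [div_le_iff₀ hG0]
  calc ‖F.eval ζ‖ = ‖g‖ * ‖ζ - α‖ := by rw [key, norm_mul]
    _ ≤ gaussNorm F * ‖ζ - α‖ := mul_le_mul_of_nonneg_right hgle (norm_nonneg _)
    _ = ‖ζ - α‖ * gaussNorm F := mul_comm _ _
end

section
/- Let p be a prime and F ∈ ℂ_p[X] a nonzero polynomial. There are at most deg(F) roots of unity ζ of order prime to p such that |F(ζ)|_p ≠ |F|_p. -/
open Polynomial IsUltrametricDist Finset

section helpers
variable {K : Type*} [NontriviallyNormedField K] [IsUltrametricDist K]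

lemma gaussNorm_nonneg (F : Polynomial K) : 0 ≤ gaussNorm F := NNReal.coe_nonneg _

lemma coeff_le_gaussNorm (F : Polynomial K) (i : ℕ) : ‖F.coeff i‖ ≤ gaussNorm F := by
  by_cases h : i ∈ F.support
  · exact_mod_cast NNReal.coe_le_coe.2 (Finset.le_sup (f := fun i => ‖F.coeff i‖₊) h)
  · rw [Polynomial.notMem_support_iff.mp h]
    simpa using gaussNorm_nonneg F

lemma gaussNorm_le {F : Polynomial K} {B : ℝ} (hB : 0 ≤ B)
    (h : ∀ i, ‖F.coeff i‖ ≤ B) : gaussNorm F ≤ B := by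
  lift B to NNReal using hB
  refine NNReal.coe_le_coe.2 (Finset.sup_le fun i _ => ?_)
  exact_mod_cast h i

lemma gaussNorm_zero : _root_.gaussNorm (0 : Polynomial K) = 0 := by simp [_root_.gaussNorm]

lemma norm_sub_le_max' (a b : K) : ‖a - b‖ ≤ max ‖a‖ ‖b‖ := by
  rw [sub_eq_add_neg]
  simpa using norm_add_le_max a (-b)

lemma eval_le_gaussNorm {F : Polynomial K} {ζ : K} (hζ : ‖ζ‖ ≤ 1) :
    ‖F.eval ζ‖ ≤ gaussNorm F := by
  rw [Polynomial.eval_eq_sum, Polynomial.sum_def]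
  refine norm_sum_le_of_forall_le_of_nonneg (gaussNorm_nonneg F) fun i _ => ?_
  calc ‖F.coeff i * ζ ^ i‖ = ‖F.coeff i‖ * ‖ζ‖ ^ i := by rw [norm_mul, norm_pow]
    _ ≤ ‖F.coeff i‖ * 1 :=
        mul_le_mul_of_nonneg_left (pow_le_one₀ (norm_nonneg _) hζ) (norm_nonneg _)
    _ ≤ gaussNorm F := by rw [mul_one]; exact coeff_le_gaussNorm F i

lemma norm_eq_one_of_pow {m : ℕ} (hm : 0 < m) {ζ : K} (h : ζ ^ m = 1) : ‖ζ‖ = 1 := by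
  have h1 : ‖ζ‖ ^ m = 1 := by rw [← norm_pow, h, norm_one]
  rcases lt_trichotomy ‖ζ‖ 1 with hlt | heq | hgt
  · have := pow_lt_one₀ (norm_nonneg ζ) hlt hm.ne'
    linarith
  · exact heq
  · have := one_lt_pow₀ hgt hm.ne'
    linarith

lemma norm_coprime {p : ℕ} (hp : p.Prime) (hpnorm : ‖(p : K)‖ = (p : ℝ)⁻¹)
    {m : ℕ} (hmp : Nat.Coprime m p) : ‖(m : K)‖ = 1 := by
  have hle : ‖(m : K)‖ ≤ 1 := norm_natCast_le_one K m
  rcases lt_or_eq_of_le hle with hlt | heq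
  · exfalso
    obtain ⟨a, b, hab⟩ := Nat.isCoprime_iff_coprime.mpr hmp
    have hcast : (a : K) * (m : K) + (b : K) * (p : K) = 1 := by
      have := congrArg (fun z : ℤ => (z : K)) hab
      push_cast at this
      exact this
    have h1 : (1 : ℝ) = ‖(a : K) * (m : K) + (b : K) * (p : K)‖ := by rw [hcast, norm_one]
    have h2 : ‖(a : K) * (m : K) + (b : K) * (p : K)‖ ≤
        max ‖(a : K) * (m : K)‖ ‖(b : K) * (p : K)‖ := norm_add_le_max _ _
    have h3 : ‖(a : K) * (m : K)‖ < 1 := by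
      rw [norm_mul]
      calc ‖(a : K)‖ * ‖(m : K)‖ ≤ 1 * ‖(m : K)‖ :=
            mul_le_mul_of_nonneg_right (norm_intCast_le_one K a) (norm_nonneg _)
        _ < 1 := by rwa [one_mul]
    have h4 : ‖(b : K) * (p : K)‖ < 1 := by
      rw [norm_mul, hpnorm]
      have hp1 : (1 : ℝ) < (p : ℝ) := by exact_mod_cast hp.one_lt
      calc ‖(b : K)‖ * (p : ℝ)⁻¹ ≤ 1 * (p : ℝ)⁻¹ :=
            mul_le_mul_of_nonneg_right (norm_intCast_le_one K b) (by positivity)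
        _ = (p : ℝ)⁻¹ := one_mul _
        _ < 1 := by rw [inv_lt_one_iff₀]; right; exact hp1
    have := max_lt h3 h4
    linarith [h1, h2]
  · exact heq

lemma norm_ru_sub_one {p : ℕ} (hp : p.Prime) (hpnorm : ‖(p : K)‖ = (p : ℝ)⁻¹)
    {m : ℕ} (hm : 0 < m) (hmp : Nat.Coprime m p) {ζ : K} (hζ : ζ ^ m = 1)
    (hζ1 : ζ ≠ 1) : ‖ζ - 1‖ = 1 := by
  have hnz : ‖ζ‖ = 1 := norm_eq_one_of_pow hm hζ
  have hle : ‖ζ - 1‖ ≤ 1 := by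
    have := norm_sub_le_max' ζ 1
    simpa [hnz] using this
  have hsum0 : ∑ i ∈ Finset.range m, ζ ^ i = 0 := by
    have h := geom_sum_mul ζ m
    rw [hζ, sub_self] at h
    rcases mul_eq_zero.mp h with h' | h'
    · exact h'
    · exact absurd (sub_eq_zero.mp h') hζ1
  have hpart : ∀ i, ‖(1 : K) - ζ ^ i‖ ≤ ‖ζ - 1‖ := by
    intro i
    have h := mul_geom_sum ζ i
    have heq : (1 : K) - ζ ^ i = -((ζ - 1) * ∑ j ∈ Finset.range i, ζ ^ j) := by
      rw [h]; ring
    rw [heq, norm_neg, norm_mul]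
    have hs : ‖∑ j ∈ Finset.range i, ζ ^ j‖ ≤ 1 := by
      refine norm_sum_le_of_forall_le_of_nonneg zero_le_one fun j _ => ?_
      rw [norm_pow, hnz, one_pow]
    calc ‖ζ - 1‖ * ‖∑ j ∈ Finset.range i, ζ ^ j‖ ≤ ‖ζ - 1‖ * 1 :=
          mul_le_mul_of_nonneg_left hs (norm_nonneg _)
      _ = ‖ζ - 1‖ := mul_one _
  have hmsum : (m : K) = ∑ i ∈ Finset.range m, ((1 : K) - ζ ^ i) := by
    rw [Finset.sum_sub_distrib, hsum0, sub_zero, Finset.sum_const, Finset.card_range,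
      nsmul_eq_mul, mul_one]
  have hge : (1 : ℝ) ≤ ‖ζ - 1‖ := by
    rw [← norm_coprime hp hpnorm hmp, hmsum]
    exact norm_sum_le_of_forall_le_of_nonneg (norm_nonneg _) fun i _ => hpart i
  linarith

lemma norm_ru_sub {p : ℕ} (hp : p.Prime) (hpnorm : ‖(p : K)‖ = (p : ℝ)⁻¹)
    {ζ₁ ζ₂ : K} (h1 : ∃ m : ℕ, 0 < m ∧ Nat.Coprime m p ∧ ζ₁ ^ m = 1)
    (h2 : ∃ m : ℕ, 0 < m ∧ Nat.Coprime m p ∧ ζ₂ ^ m = 1) (hne : ζ₁ ≠ ζ₂) :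
    ‖ζ₁ - ζ₂‖ = 1 := by
  obtain ⟨m₁, hm₁, hm₁p, hζ₁⟩ := h1
  obtain ⟨m₂, hm₂, hm₂p, hζ₂⟩ := h2
  set η := ζ₁ * ζ₂ ^ (m₂ - 1) with hη
  have hmul : η * ζ₂ = ζ₁ := by
    rw [hη, mul_assoc, ← pow_succ, Nat.sub_add_cancel hm₂, hζ₂, mul_one]
  have hηpow : η ^ (m₁ * m₂) = 1 := by
    have e1 : ζ₁ ^ (m₁ * m₂) = 1 := by rw [pow_mul, hζ₁, one_pow]
    have e2 : (ζ₂ ^ (m₂ - 1)) ^ (m₁ * m₂) = 1 := by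
      rw [← pow_mul, show (m₂ - 1) * (m₁ * m₂) = m₂ * ((m₂ - 1) * m₁) by ring,
        pow_mul, hζ₂, one_pow]
    rw [hη, mul_pow, e1, e2, one_mul]
  have hη1 : η ≠ 1 := by
    intro h
    apply hne
    rw [← hmul, h, one_mul]
  have hζ₂norm : ‖ζ₂‖ = 1 := norm_eq_one_of_pow hm₂ hζ₂
  have hfac : ζ₁ - ζ₂ = ζ₂ * (η - 1) := by
    rw [mul_sub, mul_one, mul_comm, hmul]
  rw [hfac, norm_mul, hζ₂norm, one_mul]
  exact norm_ru_sub_one hp hpnorm (Nat.mul_pos hm₁ hm₂) (Nat.Coprime.mul hm₁p hm₂p) hηpow hη1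

lemma gaussNorm_C {a : K} (ha : a ≠ 0) : gaussNorm (Polynomial.C a) = ‖a‖ := by
  unfold _root_.gaussNorm
  rw [Polynomial.support_C ha, Finset.sup_singleton, Polynomial.coeff_C_zero, coe_nnnorm]

lemma main_induction {p : ℕ} (hp : p.Prime) (hpnorm : ‖(p : K)‖ = (p : ℝ)⁻¹) :
    ∀ n : ℕ, ∀ G : Polynomial K, G ≠ 0 → G.natDegree ≤ n →
      {ζ : K | (∃ m : ℕ, 0 < m ∧ Nat.Coprime m p ∧ ζ ^ m = 1) ∧
        ‖G.eval ζ‖ ≠ gaussNorm G}.Finite ∧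
      {ζ : K | (∃ m : ℕ, 0 < m ∧ Nat.Coprime m p ∧ ζ ^ m = 1) ∧
        ‖G.eval ζ‖ ≠ gaussNorm G}.ncard ≤ n := by
  intro n
  induction n with
  | zero =>
    intro G hG hdeg
    have hd0 : G.natDegree = 0 := Nat.le_zero.mp hdeg
    have hGC : G = Polynomial.C (G.coeff 0) := Polynomial.eq_C_of_natDegree_eq_zero hd0
    have hc0 : G.coeff 0 ≠ 0 := by
      intro h
      apply hG
      rw [hGC, h, map_zero]
    have hempty : {ζ : K | (∃ m : ℕ, 0 < m ∧ Nat.Coprime m p ∧ ζ ^ m = 1) ∧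
        ‖G.eval ζ‖ ≠ gaussNorm G} = ∅ := by
      ext ζ
      simp only [Set.mem_setOf_eq, Set.mem_empty_iff_false, iff_false, not_and]
      intro _
      rw [not_not, hGC, Polynomial.eval_C, gaussNorm_C hc0]
    rw [hempty]
    exact ⟨Set.finite_empty, by simp⟩
  | succ n ih =>
    intro G hG hdeg
    by_cases hS : {ζ : K | (∃ m : ℕ, 0 < m ∧ Nat.Coprime m p ∧ ζ ^ m = 1) ∧
        ‖G.eval ζ‖ ≠ gaussNorm G} = ∅
    · rw [hS]
      exact ⟨Set.finite_empty, by simp⟩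
    · obtain ⟨ζ₀, hζ₀⟩ := Set.nonempty_iff_ne_empty.mpr hS
      obtain ⟨hru₀, hne₀⟩ := hζ₀
      obtain ⟨m₀, hm₀, hm₀p, hζ₀m⟩ := hru₀
      have hζ₀norm : ‖ζ₀‖ = 1 := norm_eq_one_of_pow hm₀ hζ₀m
      set c := G.eval ζ₀ with hc
      have ha : ‖c‖ < gaussNorm G :=
        lt_of_le_of_ne (eval_le_gaussNorm hζ₀norm.le) hne₀
      set Q := G /ₘ (X - Polynomial.C ζ₀) with hQ
      have hmonic : (X - Polynomial.C ζ₀).Monic := monic_X_sub_C ζ₀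
      have hGQ : G = (X - Polynomial.C ζ₀) * Q + Polynomial.C c := by
        have h := Polynomial.modByMonic_add_div G (X - Polynomial.C ζ₀)
        rw [Polynomial.modByMonic_X_sub_C_eq_C_eval] at h
        rw [← hc] at h
        rw [← hQ] at h
        linear_combination (norm := ring_nf) -h
      -- bound on coefficients of (X - C ζ₀) * Q
      have hcoeffmul : ∀ i, ‖((X - Polynomial.C ζ₀) * Q).coeff i‖ ≤ gaussNorm Q := by
        intro i
        have expand : ((X - Polynomial.C ζ₀) * Q).coeff i
            = (X * Q).coeff i - ζ₀ * Q.coeff i := by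
          rw [sub_mul, Polynomial.coeff_sub, Polynomial.coeff_C_mul]
        rw [expand]
        refine (norm_sub_le_max' _ _).trans (max_le ?_ ?_)
        · cases i with
          | zero => simp [gaussNorm_nonneg Q]
          | succ k =>
            rw [Polynomial.coeff_X_mul]
            exact coeff_le_gaussNorm Q k
        · rw [norm_mul, hζ₀norm, one_mul]
          exact coeff_le_gaussNorm Q i
      have htQ : gaussNorm G ≤ gaussNorm Q := by
        have hGle : gaussNorm G ≤ max (gaussNorm Q) ‖c‖ := by
          refine gaussNorm_le (le_max_of_le_left (gaussNorm_nonneg Q)) fun i => ?_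
          rw [hGQ, Polynomial.coeff_add]
          refine (norm_add_le_max _ _).trans (max_le ?_ ?_)
          · exact le_max_of_le_left (hcoeffmul i)
          · refine le_max_of_le_right ?_
            rcases eq_or_ne i 0 with rfl | hi
            · rw [Polynomial.coeff_C_zero]
            · rw [Polynomial.coeff_C, if_neg hi, norm_zero]
              exact norm_nonneg c
        rcases le_max_iff.mp hGle with h | h
        · exact h
        · linarith
      have hQ0 : Q ≠ 0 := by
        intro h
        rw [h, _root_.gaussNorm_zero] at htQ
        have := norm_nonneg c
        linarith
      have hdegQ : Q.natDegree ≤ n := by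
        rw [hQ, Polynomial.natDegree_divByMonic G hmonic, Polynomial.natDegree_X_sub_C]
        omega
      have hsub : {ζ : K | (∃ m : ℕ, 0 < m ∧ Nat.Coprime m p ∧ ζ ^ m = 1) ∧
            ‖G.eval ζ‖ ≠ gaussNorm G} ⊆
          insert ζ₀ {ζ : K | (∃ m : ℕ, 0 < m ∧ Nat.Coprime m p ∧ ζ ^ m = 1) ∧
            ‖Q.eval ζ‖ ≠ gaussNorm Q} := by
        rintro ζ ⟨hru, hnev⟩
        rcases eq_or_ne ζ ζ₀ with rfl | hζne
        · exact Set.mem_insert _ _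
        · refine Set.mem_insert_of_mem _ ⟨hru, ?_⟩
          obtain ⟨m, hm, hmp, hζm⟩ := hru
          have hζnorm : ‖ζ‖ = 1 := norm_eq_one_of_pow hm hζm
          have hGζ : ‖G.eval ζ‖ < gaussNorm G :=
            lt_of_le_of_ne (eval_le_gaussNorm hζnorm.le) hnev
          have hevalG : G.eval ζ = (ζ - ζ₀) * Q.eval ζ + c := by
            conv_lhs => rw [hGQ]
            simp
          have hdist : ‖ζ - ζ₀‖ = 1 :=
            norm_ru_sub hp hpnorm ⟨m, hm, hmp, hζm⟩ ⟨m₀, hm₀, hm₀p, hζ₀m⟩ hζne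
          have hQeval : ‖Q.eval ζ‖ < gaussNorm Q := by
            have h1 : ‖Q.eval ζ‖ = ‖G.eval ζ - c‖ := by
              rw [hevalG]
              rw [add_sub_cancel_right, norm_mul, hdist, one_mul]
            rw [h1]
            calc ‖G.eval ζ - c‖ ≤ max ‖G.eval ζ‖ ‖c‖ := norm_sub_le_max' _ _
              _ < gaussNorm G := max_lt hGζ ha
              _ ≤ gaussNorm Q := htQ
          exact hQeval.ne
      obtain ⟨hfinQ, hcardQ⟩ := ih Q hQ0 hdegQ
      have hfin : {ζ : K | (∃ m : ℕ, 0 < m ∧ Nat.Coprime m p ∧ ζ ^ m = 1) ∧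
          ‖G.eval ζ‖ ≠ gaussNorm G}.Finite := (hfinQ.insert ζ₀).subset hsub
      refine ⟨hfin, ?_⟩
      calc {ζ : K | (∃ m : ℕ, 0 < m ∧ Nat.Coprime m p ∧ ζ ^ m = 1) ∧
            ‖G.eval ζ‖ ≠ gaussNorm G}.ncard
          ≤ (insert ζ₀ {ζ : K | (∃ m : ℕ, 0 < m ∧ Nat.Coprime m p ∧ ζ ^ m = 1) ∧
            ‖Q.eval ζ‖ ≠ gaussNorm Q}).ncard :=
            Set.ncard_le_ncard hsub (hfinQ.insert ζ₀)
        _ ≤ {ζ : K | (∃ m : ℕ, 0 < m ∧ Nat.Coprime m p ∧ ζ ^ m = 1) ∧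
            ‖Q.eval ζ‖ ≠ gaussNorm Q}.ncard + 1 := Set.ncard_insert_le _ _
        _ ≤ n + 1 := by omega

end helpers

/-- Let `p` be a prime and `F ∈ ℂ_p[X]` nonzero. There are at most `deg F` roots of
unity `ζ` of order prime to `p` such that `|F(ζ)|_p ≠ |F|_p`. -/
theorem stmt5 {p : ℕ} (hp : p.Prime)
    {K : Type*} [NontriviallyNormedField K] [IsUltrametricDist K] [IsAlgClosed K]
    [CompleteSpace K] (hpnorm : ‖(p : K)‖ = (p : ℝ)⁻¹)
    (F : Polynomial K) (hF : F ≠ 0) :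
    {ζ : K | (∃ m : ℕ, 0 < m ∧ Nat.Coprime m p ∧ ζ ^ m = 1) ∧
        ‖F.eval ζ‖ ≠ gaussNorm F}.Finite ∧
      {ζ : K | (∃ m : ℕ, 0 < m ∧ Nat.Coprime m p ∧ ζ ^ m = 1) ∧
        ‖F.eval ζ‖ ≠ gaussNorm F}.ncard ≤ F.natDegree :=
  main_induction hp hpnorm F.natDegree F hF le_rfl
end

section
/- Let p be a prime, F ∈ ℂ_p[X] a nonzero polynomial, and ζ ∈ ℂ_p a root of unity of order p^k·m with p ∤ m. Let M be a nonempty subset of Gal(ℚ(ζ)/ℚ) such that F(σ(ζ)) ≠ 0 for all σ ∈ M. Then |(1/#M)·Σ_{σ∈M} log|F(σ(ζ))|_p − log|F|_p| ≤ (deg F / #M)·(c(F) + k·log p). -/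
set_option linter.unusedSectionVars false
set_option linter.unusedVariables false
set_option maxHeartbeats 1000000

open Polynomial Finset IsUltrametricDist
open scoped Classical

section Lemmas

variable {K : Type*} [NontriviallyNormedField K] [IsUltrametricDist K]

lemma nnnorm_sub_le_max' (x y : K) : ‖x - y‖₊ ≤ max ‖x‖₊ ‖y‖₊ := by
  rw [sub_eq_add_neg]
  simpa using nnnorm_add_le_max x (-y)

lemma nnnorm_sub_eq_max' {x y : K} (h : ‖x‖₊ ≠ ‖y‖₊) : ‖x - y‖₊ = max ‖x‖₊ ‖y‖₊ := by
  rw [sub_eq_add_neg]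
  simpa using nnnorm_add_eq_max_of_nnnorm_ne_nnnorm (x := x) (y := -y) (by simpa using h)

lemma tors_nnnorm_eq_one {ξ : K} (h : IsOfFinOrder ξ) : ‖ξ‖₊ = 1 := by
  obtain ⟨n, hn, hξ⟩ := isOfFinOrder_iff_pow_eq_one.mp h
  have : ‖ξ‖₊ ^ n = 1 := by rw [← nnnorm_pow, hξ, nnnorm_one]
  exact (pow_eq_one_iff_left hn.ne').mp this

lemma one_sub_nnnorm_le_one {η : K} (h : ‖η‖₊ ≤ 1) : ‖1 - η‖₊ ≤ 1 := by
  have := nnnorm_add_le_max (1:K) (-η)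
  simp only [← sub_eq_add_neg, nnnorm_neg, nnnorm_one] at this
  exact this.trans (by simp [h])

lemma one_sub_pow_nnnorm_le {η : K} (h : ‖η‖₊ ≤ 1) (t : ℕ) : ‖1 - η ^ t‖₊ ≤ ‖1 - η‖₊ := by
  have hgs := geom_sum_mul η t
  have heq : 1 - η ^ t = (∑ i ∈ range t, η ^ i) * (1 - η) := by linear_combination hgs
  rw [heq, nnnorm_mul]
  calc ‖∑ i ∈ range t, η ^ i‖₊ * ‖1 - η‖₊ ≤ 1 * ‖1 - η‖₊ := by
        gcongr
        refine nnnorm_sum_le_of_forall_le (fun i _ => ?_)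
        exact (nnnorm_pow_le η i).trans (by simpa using pow_le_one' h i)
    _ = ‖1 - η‖₊ := one_mul _

lemma prod_one_sub_nthRoots [IsAlgClosed K] {η : K} {d : ℕ} (hd : 0 < d) (hη : orderOf η = d) :
    ∏ ξ ∈ (nthRootsFinset d (1 : K)).erase 1, (1 - ξ) = (d : K) := by
  have hprim : IsPrimitiveRoot η d := hη ▸ IsPrimitiveRoot.orderOf η
  have h1 : (1 : K) ∈ nthRootsFinset d (1 : K) := one_mem_nthRootsFinset hd
  have hsplit : X ^ d - 1 = (X - C 1) * ∏ ξ ∈ (nthRootsFinset d (1 : K)).erase 1, (X - C ξ) := by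
    rw [X_pow_sub_one_eq_prod hd hprim, ← Finset.mul_prod_erase _ _ h1]
  have hgeom : X ^ d - 1 = (X - C 1) * ∑ i ∈ range d, (X : K[X]) ^ i := by
    have := geom_sum_mul (X : K[X]) d
    rw [← this]; simp only [C_1]; ring
  have hX1 : (X - C (1:K)) ≠ 0 := X_sub_C_ne_zero 1
  have hQ : ∏ ξ ∈ (nthRootsFinset d (1 : K)).erase 1, (X - C ξ) = ∑ i ∈ range d, (X : K[X]) ^ i :=
    mul_left_cancel₀ hX1 (hsplit ▸ hgeom ▸ rfl)
  have := congrArg (eval 1) hQ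
  simpa [eval_prod, eval_geom_sum] using this

lemma nat_nnnorm_eq_one {p : ℕ} (hp : p.Prime) (hpnorm : ‖(p : K)‖ = (p : ℝ)⁻¹) {n : ℕ}
    (h : ¬ p ∣ n) : ‖(n : K)‖ = 1 := by
  have hp1 : (1:ℝ) < p := by exact_mod_cast hp.one_lt
  have hplt : ‖(p : K)‖ < 1 := by rw [hpnorm]; rw [inv_lt_one_iff₀]; right; exact hp1
  have hcop : Nat.Coprime p n := (Nat.Prime.coprime_iff_not_dvd hp).mpr h
  have hbez := Nat.gcd_eq_gcd_ab p n
  rw [hcop] at hbez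
  have hK : (1 : K) = (p : K) * ((Nat.gcdA p n : ℤ) : K) + (n : K) * ((Nat.gcdB p n : ℤ) : K) := by
    have := congrArg (fun z : ℤ => (z : K)) hbez
    push_cast at this ⊢
    simpa using this
  have hle : (1:ℝ) ≤ max (‖(p:K)‖ * ‖((Nat.gcdA p n : ℤ) : K)‖) (‖(n:K)‖ * ‖((Nat.gcdB p n : ℤ) : K)‖) := by
    calc (1:ℝ) = ‖(1:K)‖ := by simp
    _ ≤ _ := by
      rw [hK]
      simpa [norm_mul] using norm_add_le_max ((p : K) * ((Nat.gcdA p n : ℤ) : K))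
        ((n : K) * ((Nat.gcdB p n : ℤ) : K))
  have hA : ‖((Nat.gcdA p n : ℤ) : K)‖ ≤ 1 := norm_intCast_le_one K _
  have hB : ‖((Nat.gcdB p n : ℤ) : K)‖ ≤ 1 := norm_intCast_le_one K _
  have hnle : ‖(n:K)‖ ≤ 1 := norm_natCast_le_one K n
  rcases le_max_iff.mp hle with h1 | h2
  · exfalso
    nlinarith [norm_nonneg ((Nat.gcdA p n : ℤ) : K), norm_nonneg ((p:K))]
  · have : (1:ℝ) ≤ ‖(n:K)‖ := by nlinarith [norm_nonneg ((Nat.gcdB p n : ℤ) : K), norm_nonneg ((n:K))]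
    linarith

section RootsOfUnity

variable [IsAlgClosed K] {p : ℕ}

lemma prod_nnnorm_one_sub_nthRoots {η : K} {d : ℕ} (hd : 0 < d) (hη : orderOf η = d) :
    ∏ ξ ∈ (nthRootsFinset d (1 : K)).erase 1, ‖1 - ξ‖₊ = ‖(d : K)‖₊ := by
  rw [← nnnorm_prod, prod_one_sub_nthRoots hd hη]

lemma mem_erase_nthRoots {η : K} {d : ℕ} (hd : 1 < d) (hη : orderOf η = d) :
    η ∈ (nthRootsFinset d (1 : K)).erase 1 := by
  refine Finset.mem_erase.mpr ⟨?_, ?_⟩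
  · intro h; rw [h, orderOf_one] at hη; omega
  · rw [mem_nthRootsFinset (by omega)]
    rw [← hη]; exact pow_orderOf_eq_one η

lemma factor_le_one_sub {η ξ : K} {d : ℕ} (hd : 0 < d) (hη : orderOf η = d)
    (hξ : ξ ∈ (nthRootsFinset d (1 : K)).erase 1) : ‖1 - ξ‖₊ ≤ ‖1 - η‖₊ := by
  haveI : NeZero d := ⟨hd.ne'⟩
  have hprim : IsPrimitiveRoot η d := hη ▸ IsPrimitiveRoot.orderOf η
  obtain ⟨-, hmem⟩ := Finset.mem_erase.mp hξ
  rw [mem_nthRootsFinset hd] at hmem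
  obtain ⟨i, -, rfl⟩ := hprim.eq_pow_of_pow_eq_one hmem
  have hη1 : ‖η‖₊ ≤ 1 := by
    rw [tors_nnnorm_eq_one]
    exact orderOf_pos_iff.mp (hη ▸ hd)
  exact one_sub_pow_nnnorm_le hη1 i

lemma nnnorm_tors_le_one {η : K} (h : IsOfFinOrder η) : ‖1 - η‖₊ ≤ 1 :=
  one_sub_nnnorm_le_one (le_of_eq (tors_nnnorm_eq_one h))

lemma norm_nat_le_one_sub {d : ℕ} (hd : 1 < d) {η : K} (hη : orderOf η = d) :
    ‖(d : K)‖₊ ≤ ‖1 - η‖₊ := by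
  have hfin : IsOfFinOrder η := orderOf_pos_iff.mp (hη ▸ (by omega : 0 < d))
  have hprod := prod_nnnorm_one_sub_nthRoots (K := K) (by omega : 0 < d) hη
  have hmem := mem_erase_nthRoots (K := K) hd hη
  have hpeel := Finset.mul_prod_erase _ (fun ξ => ‖1 - ξ‖₊) hmem
  have hrest : ∏ ξ ∈ ((nthRootsFinset d (1 : K)).erase 1).erase η, ‖1 - ξ‖₊ ≤ 1 :=
    Finset.prod_le_one' (fun ξ hξ =>
      (factor_le_one_sub (by omega) hη (Finset.mem_of_mem_erase hξ)).trans
        (nnnorm_tors_le_one hfin))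
  calc ‖(d : K)‖₊ = ‖1 - η‖₊ * ∏ ξ ∈ ((nthRootsFinset d (1 : K)).erase 1).erase η, ‖1 - ξ‖₊ := by
        rw [← hprod, ← hpeel]
    _ ≤ ‖1 - η‖₊ * 1 := mul_le_mul' le_rfl hrest
    _ = ‖1 - η‖₊ := mul_one _

lemma one_sub_nnnorm_eq_one_of_not_dvd (hp : p.Prime) (hpnorm : ‖(p : K)‖ = (p : ℝ)⁻¹)
    {η : K} {d : ℕ} (hd : 1 < d) (hη : orderOf η = d) (hpd : ¬ p ∣ d) : ‖1 - η‖₊ = 1 := by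
  have hfin : IsOfFinOrder η := orderOf_pos_iff.mp (hη ▸ (by omega : 0 < d))
  refine le_antisymm (nnnorm_tors_le_one hfin) ?_
  have hdnorm : ‖(d : K)‖₊ = 1 := by
    have := nat_nnnorm_eq_one (K := K) hp hpnorm hpd
    exact NNReal.coe_injective (by simpa using this)
  exact hdnorm ▸ norm_nat_le_one_sub hd hη

lemma p_nnnorm_inv (hp : p.Prime) (hpnorm : ‖(p : K)‖ = (p : ℝ)⁻¹) :
    ‖(p : K)‖₊ = (p : NNReal)⁻¹ := by
  apply NNReal.coe_injective
  push_cast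
  simpa using hpnorm

lemma p_inv_le_one_sub_nnnorm (hp : p.Prime) (hpnorm : ‖(p : K)‖ = (p : ℝ)⁻¹)
    {η : K} {j : ℕ} (hη : η ^ p ^ j = 1) (hne : η ≠ 1) : (p : NNReal)⁻¹ ≤ ‖1 - η‖₊ := by
  have hppos : 0 < p := hp.pos
  have hfin : IsOfFinOrder η := isOfFinOrder_iff_pow_eq_one.mpr ⟨p ^ j, pow_pos hppos j, hη⟩
  have hd : orderOf η ∣ p ^ j := orderOf_dvd_of_pow_eq_one hη
  obtain ⟨i, hij, hi⟩ := (Nat.dvd_prime_pow hp).mp hd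
  have hipos : 0 < i := by
    rcases Nat.eq_zero_or_pos i with h0 | h
    · exfalso; apply hne; rw [← orderOf_eq_one_iff, hi, h0, pow_zero]
    · exact h
  set μ := η ^ (p ^ (i - 1)) with hμ
  have hμord : orderOf μ = p := by
    rw [hμ, orderOf_pow_of_dvd (pow_pos hppos (i-1)).ne'
      (by rw [hi]; exact pow_dvd_pow p (by omega)), hi,
      Nat.pow_div (by omega) hppos, (by omega : i - (i - 1) = 1), pow_one]
  have hη1 : ‖η‖₊ ≤ 1 := le_of_eq (tors_nnnorm_eq_one hfin)
  calc (p : NNReal)⁻¹ = ‖(p : K)‖₊ := (p_nnnorm_inv hp hpnorm).symm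
    _ ≤ ‖1 - μ‖₊ := norm_nat_le_one_sub hp.one_lt hμord
    _ ≤ ‖1 - η‖₊ := one_sub_pow_nnnorm_le hη1 _

lemma p_inv_le_one_sub_nnnorm_tors (hp : p.Prime) (hpnorm : ‖(p : K)‖ = (p : ℝ)⁻¹)
    {η : K} (hfin : IsOfFinOrder η) (hne : η ≠ 1) : (p : NNReal)⁻¹ ≤ ‖1 - η‖₊ := by
  set d := orderOf η with hdd
  have hdpos : 0 < d := orderOf_pos_iff.mpr hfin
  set j := d.factorization p with hj
  set μ := η ^ (p ^ j) with hμ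
  have hdvd : p ^ j ∣ d := Nat.ordProj_dvd d p
  have hμord : orderOf μ = d / p ^ j := orderOf_pow_of_dvd (pow_pos hp.pos j).ne' (hdd ▸ hdvd)
  have hndvd : ¬ p ∣ (d / p ^ j) := Nat.not_dvd_ordCompl hp hdpos.ne'
  rcases Nat.lt_or_ge 1 (d / p ^ j) with hgt | hle
  · have h1 : ‖1 - μ‖₊ = 1 := one_sub_nnnorm_eq_one_of_not_dvd hp hpnorm hgt hμord hndvd
    have h2 : (1:NNReal) ≤ ‖1 - η‖₊ :=
      h1 ▸ one_sub_pow_nnnorm_le (le_of_eq (tors_nnnorm_eq_one hfin)) (p ^ j)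
    refine le_trans ?_ h2
    exact inv_le_one_of_one_le₀ (by exact_mod_cast hp.one_le)
  · have hepos : 0 < d / p ^ j := Nat.div_pos (Nat.le_of_dvd hdpos hdvd) (pow_pos hp.pos j)
    have he1 : d / p ^ j = 1 := by omega
    have hμ1 : η ^ p ^ j = 1 := by
      have := orderOf_eq_one_iff.mp (by rw [hμord, he1] : orderOf μ = 1)
      simpa [hμ] using this
    exact p_inv_le_one_sub_nnnorm hp hpnorm hμ1 hne

lemma pow_pk_eq_one_of_close (hp : p.Prime) (hpnorm : ‖(p : K)‖ = (p : ℝ)⁻¹)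
    {k m : ℕ} (hm : 0 < m) (hpm : ¬ p ∣ m)
    {η : K} (hη : η ^ (p ^ k * m) = 1) (hlt : ‖1 - η‖₊ < 1) : η ^ p ^ k = 1 := by
  set μ := η ^ p ^ k with hμdef
  have hμm : μ ^ m = 1 := by rw [hμdef, ← pow_mul]; exact hη
  have hfinη : IsOfFinOrder η := isOfFinOrder_iff_pow_eq_one.mpr
    ⟨p ^ k * m, by have := hp.pos; positivity, hη⟩
  have hedvd : orderOf μ ∣ m := orderOf_dvd_of_pow_eq_one hμm
  have hepos : 0 < orderOf μ := orderOf_pos_iff.mpr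
    (isOfFinOrder_iff_pow_eq_one.mpr ⟨m, hm, hμm⟩)
  rcases Nat.lt_or_ge 1 (orderOf μ) with hgt | hle
  · exfalso
    have hpe : ¬ p ∣ orderOf μ := fun h => hpm (h.trans hedvd)
    have h1 : ‖1 - μ‖₊ = 1 := one_sub_nnnorm_eq_one_of_not_dvd hp hpnorm hgt rfl hpe
    have h2 : ‖1 - μ‖₊ ≤ ‖1 - η‖₊ :=
      one_sub_pow_nnnorm_le (le_of_eq (tors_nnnorm_eq_one hfinη)) (p ^ k)
    rw [h1] at h2
    exact absurd (lt_of_le_of_lt h2 hlt) (lt_irrefl 1)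
  · have : orderOf μ = 1 := by omega
    exact orderOf_eq_one_iff.mp this

lemma cluster_prod (hp : p.Prime) (hpnorm : ‖(p : K)‖ = (p : ℝ)⁻¹) {k : ℕ}
    {ω : K} (hω : orderOf ω = p ^ k) {ι : Type*} (S : Finset ι) (g : ι → K)
    (hinj : Set.InjOn g S) (hg : ∀ σ ∈ S, g σ ^ p ^ k = 1 ∧ g σ ≠ 1) :
    ((p : NNReal)⁻¹) ^ k ≤ ∏ σ ∈ S, ‖1 - g σ‖₊ := by
  have hpk : 0 < p ^ k := pow_pos hp.pos k
  set T := S.image g with hT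
  have hsub : T ⊆ (nthRootsFinset (p ^ k) (1 : K)).erase 1 := by
    intro ξ hξ
    obtain ⟨σ, hσ, rfl⟩ := Finset.mem_image.mp hξ
    exact Finset.mem_erase.mpr ⟨(hg σ hσ).2, (mem_nthRootsFinset hpk 1).mpr (hg σ hσ).1⟩
  have himg : ∏ σ ∈ S, ‖1 - g σ‖₊ = ∏ ξ ∈ T, ‖1 - ξ‖₊ :=
    (Finset.prod_image (f := fun ξ => ‖1 - ξ‖₊) (fun x hx y hy hxy => hinj hx hy hxy)).symm
  have hfull : ∏ ξ ∈ (nthRootsFinset (p ^ k) (1 : K)).erase 1, ‖1 - ξ‖₊ = ((p : NNReal)⁻¹) ^ k := by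
    rw [prod_nnnorm_one_sub_nthRoots hpk hω]
    rw [Nat.cast_pow, nnnorm_pow, p_nnnorm_inv hp hpnorm, inv_pow]
  have hsdiff := Finset.prod_sdiff (f := fun ξ => ‖1 - ξ‖₊) hsub
  have hrest : ∏ ξ ∈ (nthRootsFinset (p ^ k) (1 : K)).erase 1 \ T, ‖1 - ξ‖₊ ≤ 1 := by
    refine Finset.prod_le_one' (fun ξ hξ => ?_)
    have hmem := Finset.mem_of_mem_erase (Finset.mem_sdiff.mp hξ).1
    rw [mem_nthRootsFinset hpk] at hmem
    exact nnnorm_tors_le_one (isOfFinOrder_iff_pow_eq_one.mpr ⟨p ^ k, hpk, hmem⟩)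
  calc ((p : NNReal)⁻¹) ^ k = ∏ ξ ∈ (nthRootsFinset (p ^ k) (1 : K)).erase 1, ‖1 - ξ‖₊ := hfull.symm
    _ = (∏ ξ ∈ (nthRootsFinset (p ^ k) (1 : K)).erase 1 \ T, ‖1 - ξ‖₊) * ∏ ξ ∈ T, ‖1 - ξ‖₊ := hsdiff.symm
    _ ≤ 1 * ∏ ξ ∈ T, ‖1 - ξ‖₊ := mul_le_mul' hrest le_rfl
    _ = ∏ σ ∈ S, ‖1 - g σ‖₊ := by rw [one_mul, himg]

end RootsOfUnity

/-- NNReal-valued Gauss norm. -/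
noncomputable def gn (F : Polynomial K) : NNReal := F.support.sup fun i => ‖F.coeff i‖₊

lemma gn_coeff_le (F : Polynomial K) (i : ℕ) : ‖F.coeff i‖₊ ≤ gn F := by
  by_cases h : i ∈ F.support
  · exact Finset.le_sup (f := fun i => ‖F.coeff i‖₊) h
  · simp [Polynomial.notMem_support_iff.mp h]

lemma gn_pos {F : Polynomial K} (hF : F ≠ 0) : 0 < gn F := by
  obtain ⟨i, hi⟩ := Polynomial.support_nonempty.mpr hF
  have h : 0 < ‖F.coeff i‖₊ := by
    simp only [pos_iff_ne_zero, ne_eq, nnnorm_eq_zero]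
    exact Polynomial.mem_support_iff.mp hi
  exact lt_of_lt_of_le h (gn_coeff_le F i)

lemma gn_exists {F : Polynomial K} (hF : F ≠ 0) : ∃ i ∈ F.support, ‖F.coeff i‖₊ = gn F := by
  obtain ⟨i, hi, h⟩ := Finset.exists_mem_eq_sup F.support (Polynomial.support_nonempty.mpr hF)
    (fun i => ‖F.coeff i‖₊)
  exact ⟨i, hi, h.symm⟩

lemma gn_le {F : Polynomial K} {c : NNReal} (h : ∀ i, ‖F.coeff i‖₊ ≤ c) : gn F ≤ c :=
  Finset.sup_le fun i _ => h i

lemma gn_C (a : K) : gn (C a) = ‖a‖₊ := by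
  refine le_antisymm (gn_le fun i => ?_) ?_
  · rcases Nat.eq_zero_or_pos i with rfl | h
    · simp
    · simp [Polynomial.coeff_C, Nat.pos_iff_ne_zero.mp h]
  · simpa using gn_coeff_le (C a) 0

lemma gn_C_mul (a : K) (F : Polynomial K) : gn (C a * F) = ‖a‖₊ * gn F := by
  have key : ∀ (b : K) (G : Polynomial K), gn (C b * G) ≤ ‖b‖₊ * gn G := by
    intro b G
    refine gn_le fun i => ?_
    rw [Polynomial.coeff_C_mul, nnnorm_mul]
    exact mul_le_mul' le_rfl (gn_coeff_le G i)
  rcases eq_or_ne a 0 with rfl | ha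
  · simp [gn]
  refine le_antisymm (key a F) ?_
  have h2 := key a⁻¹ (C a * F)
  rw [← mul_assoc, ← Polynomial.C_mul, inv_mul_cancel₀ ha, Polynomial.C_1, one_mul] at h2
  calc ‖a‖₊ * gn F ≤ ‖a‖₊ * (‖a⁻¹‖₊ * gn (C a * F)) := mul_le_mul' le_rfl h2
    _ = gn (C a * F) := by
        rw [← mul_assoc, ← nnnorm_mul, mul_inv_cancel₀ ha]
        simp

lemma gn_linear_mul (α : K) (F : Polynomial K) :
    gn ((X - C α) * F) = max 1 ‖α‖₊ * gn F := by
  rcases eq_or_ne F 0 with rfl | hF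
  · simp [gn]
  have hcoeff : ∀ n, ((X - C α) * F).coeff n = (X * F).coeff n - α * F.coeff n := by
    intro n; rw [sub_mul, Polynomial.coeff_sub, Polynomial.coeff_C_mul]
  have hupper : gn ((X - C α) * F) ≤ max 1 ‖α‖₊ * gn F := by
    refine gn_le fun n => ?_
    rw [hcoeff n]
    refine (nnnorm_sub_le_max' _ _).trans (max_le ?_ ?_)
    · rcases n with _ | n
      · simp
      · rw [Polynomial.coeff_X_mul]
        calc ‖F.coeff n‖₊ ≤ gn F := gn_coeff_le F n
          _ = 1 * gn F := (one_mul _).symm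
          _ ≤ max 1 ‖α‖₊ * gn F := mul_le_mul' (le_max_left _ _) le_rfl
    · rw [nnnorm_mul]
      exact mul_le_mul' (le_max_right _ _) (gn_coeff_le F n)
  refine le_antisymm hupper ?_
  set T := F.support.filter (fun i => ‖F.coeff i‖₊ = gn F) with hT
  have hTne : T.Nonempty := by
    obtain ⟨i, hi, h⟩ := gn_exists hF
    exact ⟨i, Finset.mem_filter.mpr ⟨hi, h⟩⟩
  have hmemT : ∀ i, ‖F.coeff i‖₊ = gn F → i ∈ T := by
    intro i h
    refine Finset.mem_filter.mpr ⟨Polynomial.mem_support_iff.mpr ?_, h⟩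
    intro h0
    rw [h0] at h
    exact (gn_pos hF).ne (by simpa using h)
  rcases le_or_gt ‖α‖₊ 1 with hα | hα
  · rw [max_eq_left hα, one_mul]
    set i₀ := T.max' hTne with hi₀
    have hi₀T : i₀ ∈ T := T.max'_mem hTne
    have hval : ‖F.coeff i₀‖₊ = gn F := (Finset.mem_filter.mp hi₀T).2
    have hnext : ‖F.coeff (i₀ + 1)‖₊ < gn F := by
      rcases lt_or_eq_of_le (gn_coeff_le F (i₀ + 1)) with h | h
      · exact h
      · exact absurd (T.le_max' _ (hmemT _ h)) (by omega)
    have hkey : ‖((X - C α) * F).coeff (i₀ + 1)‖₊ = gn F := by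
      rw [hcoeff, Polynomial.coeff_X_mul]
      have hlt : ‖α * F.coeff (i₀+1)‖₊ < ‖F.coeff i₀‖₊ := by
        rw [nnnorm_mul, hval]
        exact lt_of_le_of_lt (mul_le_of_le_one_left (zero_le) hα) hnext
      rw [nnnorm_sub_eq_max' hlt.ne', max_eq_left hlt.le, hval]
    rw [← hkey]; exact gn_coeff_le _ _
  · rw [max_eq_right hα.le]
    set i₀ := T.min' hTne with hi₀
    have hi₀T : i₀ ∈ T := T.min'_mem hTne
    have hval : ‖F.coeff i₀‖₊ = gn F := (Finset.mem_filter.mp hi₀T).2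
    have hXF : ‖(X * F).coeff i₀‖₊ < ‖α‖₊ * gn F := by
      have hgn : gn F < ‖α‖₊ * gn F := by
        have := mul_lt_mul_of_pos_right hα (gn_pos hF)
        simpa using this
      rcases Nat.eq_zero_or_pos i₀ with h0 | hpos
      · rw [h0]; simpa using lt_of_le_of_lt (zero_le) hgn
      · obtain ⟨j, hj⟩ := Nat.exists_eq_succ_of_ne_zero hpos.ne'
        rw [hj, Polynomial.coeff_X_mul]
        refine lt_of_lt_of_le ?_ hgn.le
        rcases lt_or_eq_of_le (gn_coeff_le F j) with h | h
        · exact h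
        · exact absurd (T.min'_le _ (hmemT _ h)) (by omega)
    have hkey : ‖((X - C α) * F).coeff i₀‖₊ = ‖α‖₊ * gn F := by
      rw [hcoeff]
      have hαF : ‖α * F.coeff i₀‖₊ = ‖α‖₊ * gn F := by rw [nnnorm_mul, hval]
      rw [nnnorm_sub_eq_max' (by rw [hαF]; exact hXF.ne), max_eq_right (by rw [hαF]; exact hXF.le), hαF]
    rw [← hkey]; exact gn_coeff_le _ _

lemma gn_multiset (a : K) (s : Multiset K) :
    gn (C a * (s.map fun r => X - C r).prod) = ‖a‖₊ * (s.map fun r => max 1 ‖r‖₊).prod := by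
  induction s using Multiset.induction_on with
  | empty => simp [gn_C]
  | cons r s ih =>
    simp only [Multiset.map_cons, Multiset.prod_cons]
    have heq : C a * ((X - C r) * (Multiset.map (fun r => X - C r) s).prod)
        = (X - C r) * (C a * (Multiset.map (fun r => X - C r) s).prod) := by ring
    rw [heq, gn_linear_mul, ih]
    ring

lemma roots_card_eq {F : Polynomial K} [IsAlgClosed K] (hF : F ≠ 0) :
    Multiset.card F.roots = F.natDegree :=
  splits_iff_card_roots.mp (IsAlgClosed.splits F)

lemma gn_factored {F : Polynomial K} [IsAlgClosed K] (hF : F ≠ 0) :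
    gn F = ‖F.leadingCoeff‖₊ * (F.roots.map fun r => max 1 ‖r‖₊).prod := by
  conv_lhs => rw [← C_leadingCoeff_mul_prod_multiset_X_sub_C (roots_card_eq hF)]
  exact gn_multiset _ _

lemma eval_factored {F : Polynomial K} [IsAlgClosed K] (hF : F ≠ 0) (ξ : K) :
    ‖F.eval ξ‖₊ = ‖F.leadingCoeff‖₊ * (F.roots.map fun r => ‖ξ - r‖₊).prod := by
  conv_lhs => rw [← C_leadingCoeff_mul_prod_multiset_X_sub_C (roots_card_eq hF)]
  rw [eval_mul, eval_C, nnnorm_mul, eval_multiset_prod]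
  congr 1
  have := (Multiset.prod_hom (Multiset.map (fun a => X - C a) F.roots |>.map (eval ξ))
    (nnnormHom : K →*₀ NNReal)).symm
  simp only [nnnormHom_apply] at this
  rw [this, Multiset.map_map, Multiset.map_map]
  congr 1
  ext r
  simp

lemma eval_le_gn {F : Polynomial K} [IsAlgClosed K] (hF : F ≠ 0) {ξ : K} (hξ : ‖ξ‖₊ ≤ 1) :
    ‖F.eval ξ‖₊ ≤ gn F := by
  rw [eval_factored hF, gn_factored hF]
  refine mul_le_mul' le_rfl (Multiset.prod_map_le_prod_map _ _ fun r _ => ?_)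
  exact (nnnorm_sub_le_max' ξ r).trans (max_le (hξ.trans (le_max_left _ _)) (le_max_right _ _))

section Inf

variable [IsAlgClosed K] {p : ℕ}

lemma tors_sep (hp : p.Prime) (hpnorm : ‖(p : K)‖ = (p : ℝ)⁻¹) {ξ τ : K}
    (hξ : IsOfFinOrder ξ) (hτ : IsOfFinOrder τ) (hne : ξ ≠ τ) :
    (p : NNReal)⁻¹ ≤ ‖ξ - τ‖₊ := by
  have hτ0 : τ ≠ 0 := by
    intro h; have := tors_nnnorm_eq_one hτ; rw [h] at this; simp at this
  obtain ⟨a, ha, hξa⟩ := isOfFinOrder_iff_pow_eq_one.mp hξ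
  obtain ⟨b, hb, hτb⟩ := isOfFinOrder_iff_pow_eq_one.mp hτ
  have hfin : IsOfFinOrder (ξ * τ⁻¹) := by
    refine isOfFinOrder_iff_pow_eq_one.mpr ⟨a * b, by positivity, ?_⟩
    rw [mul_pow, inv_pow, pow_mul, hξa, one_pow, pow_mul', hτb, one_pow, inv_one, mul_one]
  have hne1 : ξ * τ⁻¹ ≠ 1 := by
    intro h; apply hne
    field_simp at h
    exact h
  have heq : ξ - τ = -τ * (1 - ξ * τ⁻¹) := by field_simp; ring
  rw [heq, nnnorm_mul, nnnorm_neg, tors_nnnorm_eq_one hτ, one_mul]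
  exact p_inv_le_one_sub_nnnorm_tors hp hpnorm hfin hne1

lemma tors_discrete (hp : p.Prime) (hpnorm : ‖(p : K)‖ = (p : ℝ)⁻¹) (α : K) :
    ∃ b : NNReal, 0 < b ∧ ∀ ξ : K, IsOfFinOrder ξ → ξ ≠ α → b ≤ ‖ξ - α‖₊ := by
  have hppos : 0 < (p : NNReal)⁻¹ := by
    rw [pos_iff_ne_zero]
    simp [hp.ne_zero, hp.pos.ne']
  by_cases hex : ∃ τ : K, IsOfFinOrder τ ∧ ‖τ - α‖₊ < (p : NNReal)⁻¹
  · obtain ⟨τ, hτ, hτα⟩ := hex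
    by_cases hτeq : τ = α
    · subst hτeq
      exact ⟨(p : NNReal)⁻¹, hppos, fun ξ hξ hne => tors_sep hp hpnorm hξ hτ hne⟩
    · refine ⟨min ((p : NNReal)⁻¹) ‖τ - α‖₊, lt_min hppos ?_, fun ξ hξ hne => ?_⟩
      · rw [pos_iff_ne_zero, ne_eq, nnnorm_eq_zero, sub_eq_zero]; exact hτeq
      · by_cases hξτ : ξ = τ
        · rw [hξτ]; exact min_le_right _ _
        · have h1 : (p : NNReal)⁻¹ ≤ ‖ξ - τ‖₊ := tors_sep hp hpnorm hξ hτ hξτ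
          have h2 : ‖τ - α‖₊ < ‖ξ - τ‖₊ := lt_of_lt_of_le hτα h1
          have heq : ξ - α = (ξ - τ) + (τ - α) := by ring
          have h3 : ‖ξ - α‖₊ = max ‖ξ - τ‖₊ ‖τ - α‖₊ := by
            rw [heq]; exact nnnorm_add_eq_max_of_nnnorm_ne_nnnorm h2.ne'
          rw [h3, max_eq_left h2.le]
          exact le_trans (min_le_left _ _) h1
  · push_neg at hex
    exact ⟨(p : NNReal)⁻¹, hppos, fun ξ hξ _ => hex ξ hξ⟩

end Inf

end Lemmas

/-- `inf(F)`: the infimum of `|F(ξ)|_p` over roots of unity `ξ` with `F(ξ) ≠ 0`. -/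
noncomputable def infF {K : Type*} [NontriviallyNormedField K] (F : Polynomial K) : ℝ :=
  sInf {r : ℝ | ∃ ξ : K, IsOfFinOrder ξ ∧ F.eval ξ ≠ 0 ∧ r = ‖F.eval ξ‖}

/-- `c(F) = -log(inf(F)/|F|_p)`. -/
noncomputable def cF {K : Type*} [NontriviallyNormedField K] (F : Polynomial K) : ℝ :=
  -Real.log (infF F / gaussNorm F)

section InfLemmas

variable {K : Type*} [NontriviallyNormedField K] [IsUltrametricDist K] [IsAlgClosed K] {p : ℕ}

lemma gaussNorm_eq_gn (F : Polynomial K) : gaussNorm F = ((gn F : NNReal) : ℝ) := rfl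

lemma infF_le {F : Polynomial K} {ξ : K} (hξ : IsOfFinOrder ξ) (hne : F.eval ξ ≠ 0) :
    infF F ≤ ‖F.eval ξ‖ := by
  refine csInf_le ⟨0, fun r hr => ?_⟩ ⟨ξ, hξ, hne, rfl⟩
  obtain ⟨ξ', -, -, rfl⟩ := hr
  exact norm_nonneg _

lemma infF_pos (hp : p.Prime) (hpnorm : ‖(p : K)‖ = (p : ℝ)⁻¹) {F : Polynomial K} (hF : F ≠ 0)
    (hwit : ∃ ξ : K, IsOfFinOrder ξ ∧ F.eval ξ ≠ 0) : 0 < infF F := by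
  choose b hbpos hble using fun α => tors_discrete (K := K) hp hpnorm α
  set C₀ : NNReal := ‖F.leadingCoeff‖₊ * (F.roots.map b).prod with hC₀
  have hC₀pos : 0 < C₀ := by
    rw [hC₀, pos_iff_ne_zero]
    refine mul_ne_zero ?_ ?_
    · simpa using Polynomial.leadingCoeff_ne_zero.mpr hF
    · refine Multiset.prod_ne_zero ?_
      intro h0
      obtain ⟨r, -, hr⟩ := Multiset.mem_map.mp h0
      exact (hbpos r).ne' hr
  have hlb : ∀ ξ : K, IsOfFinOrder ξ → F.eval ξ ≠ 0 → C₀ ≤ ‖F.eval ξ‖₊ := by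
    intro ξ hξ hne
    rw [eval_factored hF ξ, hC₀]
    refine mul_le_mul' le_rfl (Multiset.prod_map_le_prod_map _ _ fun r hr => ?_)
    refine hble r ξ hξ ?_
    intro h; subst h
    exact hne (Polynomial.isRoot_of_mem_roots hr)
  refine lt_of_lt_of_le hC₀pos ?_
  show (C₀ : ℝ) ≤ infF F
  refine le_csInf ?_ ?_
  · obtain ⟨ξ, hξ, hne⟩ := hwit
    exact ⟨‖F.eval ξ‖, ξ, hξ, hne, rfl⟩
  · rintro r ⟨ξ, hξ, hne, rfl⟩
    exact_mod_cast hlb ξ hξ hne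

end InfLemmas

/-- Let `F ∈ ℂ_p[X]` be nonzero and `ζ` a root of unity of order `N = p^k·m`, `p ∤ m`.
Identifying `Gal(ℚ(ζ)/ℚ)` with `(ZMod N)ˣ`, let `M` be a nonempty subset with
`F(σ(ζ)) ≠ 0` for all `σ ∈ M`. Then
`|(1/#M)·Σ_{σ∈M} log|F(σ(ζ))|_p − log|F|_p| ≤ (deg F / #M)·(c(F) + k·log p)`. -/
theorem stmt9 {p : ℕ} (hp : p.Prime)
    {K : Type*} [NontriviallyNormedField K] [IsUltrametricDist K] [IsAlgClosed K]
    [CompleteSpace K] (hpnorm : ‖(p : K)‖ = (p : ℝ)⁻¹)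
    (F : Polynomial K) (hF : F ≠ 0)
    (k m N : ℕ) (hm : 0 < m) (hpm : ¬ p ∣ m) (hNval : N = p ^ k * m)
    (ζ : K) (hζ : orderOf ζ = N)
    (M : Finset (ZMod N)ˣ) (hM : M.Nonempty)
    (hvan : ∀ σ ∈ M, F.eval (ζ ^ ((σ : ZMod N).val)) ≠ 0) :
    |(1 / (M.card : ℝ)) * ∑ σ ∈ M, Real.log ‖F.eval (ζ ^ ((σ : ZMod N).val))‖
        - Real.log (gaussNorm F)|
      ≤ ((F.natDegree : ℝ) / (M.card : ℝ)) * (cF F + k * Real.log p) := by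
  classical
  haveI : NeZero N := ⟨by rw [hNval]; have := hp.pos; positivity⟩
  have hNpos : 0 < N := Nat.pos_of_ne_zero (NeZero.ne N)
  have hζfin : IsOfFinOrder ζ := orderOf_pos_iff.mp (by rw [hζ]; exact hNpos)
  set x : (ZMod N)ˣ → K := fun σ => ζ ^ ((σ : ZMod N).val) with hxdef
  have hxfin : ∀ σ, IsOfFinOrder (x σ) := fun σ => hζfin.pow
  have hxnorm : ∀ σ, ‖x σ‖₊ = 1 := fun σ => tors_nnnorm_eq_one (hxfin σ)
  have hxne : ∀ σ, x σ ≠ 0 := by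
    intro σ h
    have h2 := hxnorm σ; rw [h] at h2; simp at h2
  have hxinj : ∀ σ τ : (ZMod N)ˣ, x σ = x τ → σ = τ := by
    intro σ τ h
    have h1 : ((σ : ZMod N)).val = ((τ : ZMod N)).val := by
      refine pow_injOn_Iio_orderOf ?_ ?_ h
      · simp only [Set.mem_Iio, hζ]; exact ZMod.val_lt _
      · simp only [Set.mem_Iio, hζ]; exact ZMod.val_lt _
    exact Units.ext (ZMod.val_injective N h1)
  have hζN : ζ ^ N = 1 := by
    have h := pow_orderOf_eq_one ζ
    rwa [hζ] at h
  have hxN : ∀ τ, x τ ^ N = 1 := by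
    intro τ
    show (ζ ^ ((τ : ZMod N)).val) ^ N = 1
    rw [← pow_mul, mul_comm, pow_mul, hζN, one_pow]
  -- basic quantities
  set G : NNReal := gn F with hG
  have hGpos : 0 < G := gn_pos hF
  obtain ⟨σw, hσw⟩ := hM
  have hwit : ∃ ξ : K, IsOfFinOrder ξ ∧ F.eval ξ ≠ 0 := ⟨x σw, hxfin σw, hvan σw hσw⟩
  have hIpos : 0 < infF F := infF_pos hp hpnorm hF hwit
  set J : NNReal := Real.toNNReal (infF F) with hJ
  have hJcoe : (J : ℝ) = infF F := Real.coe_toNNReal _ hIpos.le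
  have hJpos : 0 < J := by rw [← NNReal.coe_pos, hJcoe]; exact hIpos
  have hJleG : J ≤ G := by
    have h1 : infF F ≤ ‖F.eval (x σw)‖ := infF_le (hxfin σw) (hvan σw hσw)
    have h2 : ‖F.eval (x σw)‖₊ ≤ G := eval_le_gn hF (le_of_eq (hxnorm σw))
    rw [← NNReal.coe_le_coe, hJcoe]
    refine h1.trans ?_
    exact_mod_cast h2
  have hJle : ∀ σ ∈ M, J ≤ ‖F.eval (x σ)‖₊ := by
    intro σ hσ
    rw [← NNReal.coe_le_coe, hJcoe, coe_nnnorm]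
    exact infF_le (hxfin σ) (hvan σ hσ)
  have hppos : (0:NNReal) < (p : NNReal)⁻¹ := by
    rw [pos_iff_ne_zero]
    simp [hp.ne_zero]
  set c : NNReal := (J / G) * ((p : NNReal)⁻¹) ^ k with hc
  have hJGle1 : J / G ≤ 1 := by
    rw [div_le_iff₀ hGpos, one_mul]
    exact hJleG
  have hcle1 : c ≤ 1 := by
    rw [hc]
    refine mul_le_one' hJGle1 ?_
    exact pow_le_one' (inv_le_one_of_one_le₀ (by exact_mod_cast hp.one_le)) k
  have hcpos : 0 < c := by
    rw [hc]
    exact mul_pos (by positivity) (pow_pos hppos k)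
  -- per-root bounds
  have keyroot : ∀ α ∈ F.roots,
      c * (max 1 ‖α‖₊) ^ M.card ≤ ∏ σ ∈ M, ‖x σ - α‖₊ ∧
      ∏ σ ∈ M, ‖x σ - α‖₊ ≤ (max 1 ‖α‖₊) ^ M.card := by
    intro α hα
    rcases lt_or_ge 1 ‖α‖₊ with h1 | h1
    · -- 1 < ‖α‖
      have heach : ∀ σ ∈ M, ‖x σ - α‖₊ = max 1 ‖α‖₊ := by
        intro σ hσ
        rw [nnnorm_sub_eq_max' (by rw [hxnorm σ]; exact h1.ne), hxnorm σ]
      rw [Finset.prod_congr rfl heach, Finset.prod_const]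
      exact ⟨mul_le_of_le_one_left (zero_le) hcle1, le_rfl⟩
    · -- ‖α‖ ≤ 1
      have hmax : max 1 ‖α‖₊ = 1 := max_eq_left h1
      rw [hmax, one_pow]
      have hle1 : ∀ σ ∈ M, ‖x σ - α‖₊ ≤ 1 := fun σ _ =>
        (nnnorm_sub_le_max' _ _).trans (by rw [hxnorm σ]; simp [h1])
      refine ⟨?_, Finset.prod_le_one' hle1⟩
      rw [mul_one]
      set S := M.filter (fun σ => ‖x σ - α‖₊ < 1) with hS
      have hprodS : ∏ σ ∈ M, ‖x σ - α‖₊ = ∏ σ ∈ S, ‖x σ - α‖₊ := by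
        rw [← Finset.prod_filter_mul_prod_filter_not M (fun σ => ‖x σ - α‖₊ < 1)]
        have hone : ∏ σ ∈ M.filter (fun σ => ¬ ‖x σ - α‖₊ < 1), ‖x σ - α‖₊ = 1 := by
          refine Finset.prod_eq_one fun σ hσ => ?_
          obtain ⟨hσM, hσn⟩ := Finset.mem_filter.mp hσ
          exact le_antisymm (hle1 σ hσM) (not_lt.mp hσn)
        rw [hone, mul_one]
      rw [hprodS]
      by_cases hSne : S.Nonempty
      swap
      · rw [Finset.not_nonempty_iff_eq_empty.mp hSne, Finset.prod_empty]; exact hcle1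
      obtain ⟨σ₀, hσ₀S, hmin⟩ := S.exists_min_image (fun σ => ‖x σ - α‖₊) hSne
      have hσ₀M : σ₀ ∈ M := (Finset.mem_filter.mp hσ₀S).1
      -- (i) J/G ≤ ‖x σ₀ - α‖
      have hGsplit : G = ‖F.leadingCoeff‖₊ * ((F.roots.erase α).map fun r => max 1 ‖r‖₊).prod := by
        rw [hG, gn_factored hF, ← Multiset.cons_erase hα, Multiset.map_cons, Multiset.prod_cons,
          hmax, one_mul, Multiset.erase_cons_head]
      have hi : J / G ≤ ‖x σ₀ - α‖₊ := by
        have hev : ‖F.eval (x σ₀)‖₊ ≤ ‖x σ₀ - α‖₊ * G := by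
          rw [eval_factored hF (x σ₀)]
          calc ‖F.leadingCoeff‖₊ * (F.roots.map fun r => ‖x σ₀ - r‖₊).prod
              = ‖x σ₀ - α‖₊ * (‖F.leadingCoeff‖₊ *
                  ((F.roots.erase α).map fun r => ‖x σ₀ - r‖₊).prod) := by
                conv_lhs => rw [← Multiset.cons_erase hα, Multiset.map_cons, Multiset.prod_cons]
                ring
            _ ≤ ‖x σ₀ - α‖₊ * (‖F.leadingCoeff‖₊ *
                  ((F.roots.erase α).map fun r => max 1 ‖r‖₊).prod) := by
                refine mul_le_mul' le_rfl (mul_le_mul' le_rfl ?_)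
                refine Multiset.prod_map_le_prod_map _ _ fun r _ => ?_
                exact (nnnorm_sub_le_max' _ _).trans
                  (max_le ((le_of_eq (hxnorm σ₀)).trans (le_max_left _ _)) (le_max_right _ _))
            _ = ‖x σ₀ - α‖₊ * G := by rw [hGsplit]
        have hJle2 : J ≤ ‖x σ₀ - α‖₊ * G := (hJle σ₀ hσ₀M).trans hev
        rw [div_le_iff₀ hGpos]
        exact hJle2
      -- (ii) cluster bound
      set g : (ZMod N)ˣ → K := fun σ => x σ * (x σ₀)⁻¹ with hgdef
      have hgnorm : ∀ σ, ‖x σ - x σ₀‖₊ = ‖1 - g σ‖₊ := by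
        intro σ
        have heq : x σ - x σ₀ = -(x σ₀) * (1 - g σ) := by
          show x σ - x σ₀ = -(x σ₀) * (1 - x σ * (x σ₀)⁻¹)
          have hc : x σ₀ * (x σ * (x σ₀)⁻¹) = x σ := by
            rw [mul_comm (x σ) (x σ₀)⁻¹, ← mul_assoc, mul_inv_cancel₀ (hxne σ₀), one_mul]
          calc x σ - x σ₀ = x σ₀ * (x σ * (x σ₀)⁻¹) - x σ₀ := by rw [hc]
            _ = -(x σ₀) * (1 - x σ * (x σ₀)⁻¹) := by ring
        rw [heq, nnnorm_mul, nnnorm_neg, hxnorm σ₀, one_mul]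
      have hchain : ∀ σ ∈ S.erase σ₀, ‖x σ - x σ₀‖₊ ≤ ‖x σ - α‖₊ := by
        intro σ hσ
        have hσS : σ ∈ S := Finset.mem_of_mem_erase hσ
        have hminσ := hmin σ hσS
        have heq : x σ - x σ₀ = (x σ - α) - (x σ₀ - α) := by ring
        rw [heq]
        exact (nnnorm_sub_le_max' _ _).trans (max_le le_rfl hminσ)
      have hglt : ∀ σ ∈ S.erase σ₀, ‖1 - g σ‖₊ < 1 := by
        intro σ hσ
        rw [← hgnorm σ]
        have hσS := Finset.mem_of_mem_erase hσ
        have hσlt : ‖x σ - α‖₊ < 1 := (Finset.mem_filter.mp hσS).2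
        exact lt_of_le_of_lt (hchain σ hσ) hσlt
      have hgne : ∀ σ ∈ S.erase σ₀, g σ ≠ 1 := by
        intro σ hσ h1'
        have hxx : x σ = x σ₀ := by
          have h2 : x σ * (x σ₀)⁻¹ = 1 := h1'
          field_simp at h2
          exact (div_eq_one_iff_eq (hxne σ₀)).mp h2
        exact (Finset.ne_of_mem_erase hσ) (hxinj _ _ hxx)
      have hgpk : ∀ σ ∈ S.erase σ₀, g σ ^ p ^ k = 1 := by
        intro σ hσ
        refine pow_pk_eq_one_of_close hp hpnorm hm hpm ?_ (hglt σ hσ)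
        rw [← hNval, hgdef]
        simp only
        rw [mul_pow, inv_pow, hxN, hxN, inv_one, mul_one]
      have hginj : Set.InjOn g (S.erase σ₀) := by
        intro σ hσ τ hτ h
        apply hxinj
        exact mul_right_cancel₀ (inv_ne_zero (hxne σ₀)) h
      have hω : orderOf (ζ ^ m) = p ^ k := by
        rw [orderOf_pow_of_dvd hm.ne' (by rw [hζ, hNval]; exact dvd_mul_left m (p ^ k)), hζ, hNval,
          Nat.mul_div_cancel _ hm]
      have hii : ((p : NNReal)⁻¹) ^ k ≤ ∏ σ ∈ S.erase σ₀, ‖x σ - α‖₊ := by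
        refine le_trans (cluster_prod hp hpnorm hω (S.erase σ₀) g hginj
          (fun σ hσ => ⟨hgpk σ hσ, hgne σ hσ⟩)) ?_
        refine Finset.prod_le_prod' fun σ hσ => ?_
        rw [← hgnorm σ]
        exact hchain σ hσ
      calc c = (J / G) * ((p : NNReal)⁻¹) ^ k := rfl
        _ ≤ ‖x σ₀ - α‖₊ * ∏ σ ∈ S.erase σ₀, ‖x σ - α‖₊ := mul_le_mul' hi hii
        _ = ∏ σ ∈ S, ‖x σ - α‖₊ := Finset.mul_prod_erase S (fun σ => ‖x σ - α‖₊) hσ₀S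
  -- global product bounds
  have swapms : ∀ (s : Multiset K), (∏ σ ∈ M, (s.map (fun r => ‖x σ - r‖₊)).prod)
      = (s.map fun r => ∏ σ ∈ M, ‖x σ - r‖₊).prod := by
    intro s
    induction s using Multiset.induction_on with
    | empty => simp
    | cons r s ih =>
      simp only [Multiset.map_cons, Multiset.prod_cons]
      rw [Finset.prod_mul_distrib, ih]
  have msetpow : ∀ (s : Multiset K) (f : K → NNReal) (n : ℕ),
      (s.map fun r => f r ^ n).prod = (s.map f).prod ^ n := by
    intro s f n
    induction s using Multiset.induction_on with
    | empty => simp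
    | cons r s ih => simp [Multiset.prod_cons, ih, mul_pow]
  have msetconst : ∀ (s : Multiset K) (f : K → NNReal) (u : NNReal),
      (s.map fun r => u * f r).prod = u ^ Multiset.card s * (s.map f).prod := by
    intro s f u
    induction s using Multiset.induction_on with
    | empty => simp
    | cons r s ih =>
      simp only [Multiset.map_cons, Multiset.prod_cons, ih, Multiset.card_cons]
      ring
  set Mc := M.card with hMcdef
  set d := F.natDegree with hddef
  have hdcard : Multiset.card F.roots = d := roots_card_eq hF
  set P : NNReal := ∏ σ ∈ M, ‖F.eval (x σ)‖₊ with hP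
  have hPfact : P = ‖F.leadingCoeff‖₊ ^ Mc * (F.roots.map fun r => ∏ σ ∈ M, ‖x σ - r‖₊).prod := by
    rw [hP]
    calc ∏ σ ∈ M, ‖F.eval (x σ)‖₊
        = ∏ σ ∈ M, (‖F.leadingCoeff‖₊ * (F.roots.map fun r => ‖x σ - r‖₊).prod) :=
          Finset.prod_congr rfl fun σ _ => eval_factored hF (x σ)
      _ = (∏ σ ∈ M, ‖F.leadingCoeff‖₊) * ∏ σ ∈ M, (F.roots.map fun r => ‖x σ - r‖₊).prod :=
          Finset.prod_mul_distrib
      _ = _ := by rw [Finset.prod_const, swapms]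
  have hGpow : G ^ Mc = ‖F.leadingCoeff‖₊ ^ Mc * (F.roots.map fun r => (max 1 ‖r‖₊) ^ Mc).prod := by
    rw [hG, gn_factored hF, mul_pow, ← msetpow]
  have hup : P ≤ G ^ Mc := by
    rw [hPfact, hGpow]
    exact mul_le_mul' le_rfl (Multiset.prod_map_le_prod_map _ _ fun r hr => (keyroot r hr).2)
  have hlow : c ^ d * G ^ Mc ≤ P := by
    rw [hPfact, hGpow]
    calc c ^ d * (‖F.leadingCoeff‖₊ ^ Mc * (F.roots.map fun r => (max 1 ‖r‖₊) ^ Mc).prod)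
        = ‖F.leadingCoeff‖₊ ^ Mc * (F.roots.map fun r => c * (max 1 ‖r‖₊) ^ Mc).prod := by
          rw [msetconst _ _ c, hdcard]
          ring
      _ ≤ ‖F.leadingCoeff‖₊ ^ Mc * (F.roots.map fun r => ∏ σ ∈ M, ‖x σ - r‖₊).prod :=
          mul_le_mul' le_rfl (Multiset.prod_map_le_prod_map _ _ fun r hr => (keyroot r hr).1)
  -- pass to logarithms
  have hMcpos : 0 < Mc := Finset.card_pos.mpr ⟨σw, hσw⟩
  have hMcR : (0:ℝ) < Mc := by exact_mod_cast hMcpos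
  have hPpos : 0 < P := by
    rw [hP, pos_iff_ne_zero]
    rw [Finset.prod_ne_zero_iff]
    intro σ hσ
    simpa using hvan σ hσ
  have hPR : (0:ℝ) < (P:ℝ) := hPpos
  have hGR : (0:ℝ) < (G:ℝ) := hGpos
  have hpR : (0:ℝ) < (p:ℝ) := by exact_mod_cast hp.pos
  have hcR : (0:ℝ) < (c:ℝ) := hcpos
  have hgauss : gaussNorm F = ((G : NNReal) : ℝ) := rfl
  have hsum : ∑ σ ∈ M, Real.log ‖F.eval (x σ)‖ = Real.log (P:ℝ) := by
    rw [hP, NNReal.coe_prod]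
    rw [Real.log_prod (s := M) (f := fun σ => ((‖F.eval (x σ)‖₊ : NNReal) : ℝ)) (fun σ hσ => by simpa using hvan σ hσ)]
    simp only [coe_nnnorm]
  have hupR : Real.log (P:ℝ) ≤ Mc * Real.log (G:ℝ) := by
    have hle : (P:ℝ) ≤ ((G:ℝ)) ^ Mc := by exact_mod_cast hup
    have := (Real.log_le_log_iff hPR (by positivity)).mpr hle
    rwa [Real.log_pow] at this
  have hlogc : Real.log (c:ℝ) = -(cF F) - k * Real.log p := by
    have hcoe : (c:ℝ) = ((J:ℝ) / (G:ℝ)) * ((p:ℝ)⁻¹) ^ k := by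
      rw [hc]; push_cast; ring
    rw [hcoe, Real.log_mul (by positivity) (by positivity), Real.log_pow, Real.log_inv]
    have hcf : cF F = -Real.log ((J:ℝ) / (G:ℝ)) := by
      rw [cF, hJcoe, hgauss]
    rw [hcf]
    ring
  have hlowR : -(d:ℝ) * (cF F + k * Real.log p) + Mc * Real.log (G:ℝ) ≤ Real.log (P:ℝ) := by
    have hle : ((c:ℝ)) ^ d * ((G:ℝ)) ^ Mc ≤ (P:ℝ) := by exact_mod_cast hlow
    have hlpos : (0:ℝ) < ((c:ℝ)) ^ d * ((G:ℝ)) ^ Mc := by positivity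
    have := (Real.log_le_log_iff hlpos hPR).mpr hle
    rw [Real.log_mul (by positivity) (by positivity), Real.log_pow, Real.log_pow, hlogc] at this
    nlinarith [this]
  set A := cF F + k * Real.log p with hA
  set u := Real.log (P:ℝ) - Mc * Real.log (G:ℝ) with hu
  have hu0 : u ≤ 0 := by rw [hu]; linarith
  have hu1 : -(d:ℝ) * A ≤ u := by rw [hu]; linarith
  have hdA : 0 ≤ (d:ℝ) * A := by nlinarith
  have hgoal_eq : (1 / (Mc : ℝ)) * (∑ σ ∈ M, Real.log ‖F.eval (x σ)‖)
      - Real.log (gaussNorm F) = u / Mc := by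
    rw [hsum, hgauss, hu]
    field_simp
  rw [hgoal_eq, abs_div, abs_of_pos hMcR, div_le_iff₀ hMcR]
  have habs : |u| ≤ (d:ℝ) * A := abs_le.mpr ⟨by linarith, by linarith⟩
  calc |u| ≤ (d:ℝ) * A := habs
    _ = (d:ℝ) / Mc * A * Mc := by
      have hMne : (Mc:ℝ) ≠ 0 := hMcR.ne'
      have h : ((d:ℝ)/Mc)*A*Mc = (d:ℝ)*A*((Mc:ℝ)/Mc) := by ring
      rw [h, div_self hMne, mul_one]
end
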